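/- arXiv:2204.02578 — 7 statements merged into one kernel-verified Lean document; each statement's English description precedes it below -/
import Mathlib

section
/- Let A be a primitive axial algebra of Jordan type 1/2 over a field F of characteristic not 2, and let a, b be primitive axes in A with α = (a,b) the value of the Frobenius form. Write b = a_0(b) + a_{1/2}(b) + α·a with a_0(b) ∈ A_0(a) and a_{1/2}(b) ∈ A_{1/2}(a). Then: (1) a_0(b)² = (1−α)·a_0(b); (2) a_{1/2}(b)² = α·a_0(b) + (α−α²)·a; (3) a_0(b)·a_{1/2}(b) = (1/2)(1−α)·a_{1/2}(b). -/
/-! Common framework: commutative, not-necessarily-associative, not-necessarily-unital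
algebras over a field `F` of characteristic not 2; primitive axes of Jordan type 1/2;
Frobenius forms; axial algebras of Jordan type 1/2. -/

namespace AxialPaper

variable (F : Type*) [Field F] {A : Type*} [NonUnitalNonAssocCommRing A]
  [Module F A] [SMulCommClass F A A] [IsScalarTower F A A]

/-- The `lam`-eigenvectors of `ad_e : x ↦ e * x` that lie in a subset `S ⊆ A`
(taking `S = Set.univ` recovers the eigenspace `A_lam(e)` of the whole algebra). -/
def evecIn (S : Set A) (e : A) (lam : F) : Set A :=
  {x ∈ S | e * x = lam • x}

/-- The eigenspace `A_lam(e) = {x | e * x = lam • x}`, as a submodule. -/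
def evecSub (e : A) (lam : F) : Submodule F A where
  carrier := {x | e * x = lam • x}
  add_mem' := by
    intro x y hx hy
    simp only [Set.mem_setOf_eq] at *
    rw [mul_add, hx, hy, smul_add]
  zero_mem' := by simp
  smul_mem' := by
    intro c x hx
    simp only [Set.mem_setOf_eq] at *
    rw [mul_smul_comm, hx, smul_comm]

/-- `e` is a primitive axis of Jordan type `1/2` of the (sub)algebra with underlying set `S`:
`e` is an idempotent belonging to `S`, the multiplication operator `ad_e` is diagonalizable
on `S` with eigenvalues in `{0, 1/2, 1}`, the `1`-eigenspace of `S` is spanned by `e`,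
and the fusion rules hold inside `S`.  Taking `S = Set.univ` gives the notion of a
primitive axis of the whole algebra `A`. -/
structure IsPrimitiveAxisIn (S : Set A) (e : A) : Prop where
  mem : e ∈ S
  idem : e * e = e
  decomp : ∀ x ∈ S, ∃ x0 ∈ evecIn F S e 0, ∃ xh ∈ evecIn F S e (2⁻¹ : F),
      ∃ x1 ∈ evecIn F S e 1, x = x0 + xh + x1
  prim : ∀ x ∈ evecIn F S e 1, ∃ c : F, x = c • e
  fusion00 : ∀ x ∈ evecIn F S e 0, ∀ y ∈ evecIn F S e 0, x * y ∈ evecIn F S e 0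
  fusionhh : ∀ x ∈ evecIn F S e (2⁻¹ : F), ∀ y ∈ evecIn F S e (2⁻¹ : F),
      ∃ z0 ∈ evecIn F S e 0, ∃ z1 ∈ evecIn F S e 1, x * y = z0 + z1
  fusion0h : ∀ x ∈ evecIn F S e 0, ∀ y ∈ evecIn F S e (2⁻¹ : F),
      x * y ∈ evecIn F S e (2⁻¹ : F)
  fusion1h : ∀ x ∈ evecIn F S e 1, ∀ y ∈ evecIn F S e (2⁻¹ : F),
      x * y ∈ evecIn F S e (2⁻¹ : F)
  fusion01 : ∀ x ∈ evecIn F S e 0, ∀ y ∈ evecIn F S e 1, x * y = 0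

/-- A primitive axis (of Jordan type 1/2) of the whole algebra `A`. -/
abbrev IsPrimitiveAxis (e : A) : Prop := IsPrimitiveAxisIn F Set.univ e

/-- A primitive semisimple idempotent whose eigenvalues lie in `{0, 1/2, 1}`
(no fusion rules required). -/
def IsPrimSemisimpleIdem (e : A) : Prop :=
  e * e = e ∧
  (∀ x : A, ∃ x0 ∈ evecIn F (Set.univ : Set A) e 0,
      ∃ xh ∈ evecIn F (Set.univ : Set A) e (2⁻¹ : F),
      ∃ x1 ∈ evecIn F (Set.univ : Set A) e 1, x = x0 + xh + x1) ∧
  (∀ x ∈ evecIn F (Set.univ : Set A) e 1, ∃ c : F, x = c • e)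

variable (A) in
/-- `A` is a (primitive) axial algebra of Jordan type `1/2`: it is generated, as a
nonunital nonassociative algebra, by a set of primitive axes. -/
def IsAxialJordanHalf : Prop :=
  ∃ S : Set A, (∀ a ∈ S, IsPrimitiveAxis F a) ∧ NonUnitalAlgebra.adjoin F S = ⊤

/-- `Bf` is a Frobenius form: a nonzero symmetric invariant bilinear form with
`(a, a) = 1` for every primitive axis `a`. -/
def IsFrobeniusForm (Bf : A →ₗ[F] A →ₗ[F] F) : Prop :=
  Bf ≠ 0 ∧ (∀ x y : A, Bf x y = Bf y x) ∧ (∀ x y z : A, Bf (x * y) z = Bf x (y * z)) ∧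
    (∀ e : A, IsPrimitiveAxis F e → Bf e e = 1)

/-- Quasi-definiteness: `(a, b) = 1` for primitive axes `a, b` implies `a = b`. -/
def QuasiDefinite (Bf : A →ₗ[F] A →ₗ[F] F) : Prop :=
  ∀ a b : A, IsPrimitiveAxis F a → IsPrimitiveAxis F b → Bf a b = 1 → a = b

variable (A) in
/-- Strong axiality: every primitive semisimple idempotent with eigenvalues in
`{0, 1/2, 1}` is a primitive axis. -/
def StronglyAxial : Prop :=
  ∀ e : A, IsPrimSemisimpleIdem F e → IsPrimitiveAxis F e

/-- The element `x_a(b) = (2ab − (a,b)a − b)/((a,b) − 1)`. -/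
def xab (Bf : A →ₗ[F] A →ₗ[F] F) (a b : A) : A :=
  (Bf a b - 1)⁻¹ • ((2 : F) • (a * b) - Bf a b • a - b)

end AxialPaper

namespace AxialHelper

open AxialPaper

variable {F : Type*} [Field F] {A : Type*} [NonUnitalNonAssocCommRing A]
  [Module F A] [SMulCommClass F A A] [IsScalarTower F A A]

/-- Uniqueness of eigencomponents for eigenvalues `0, 1/2, 1` when `char F ≠ 2`. -/
lemma uniq3 (h2 : (2:F) ≠ 0) {a x0 xh x1 : A} (h0 : a * x0 = 0)
    (hh : a * xh = (2⁻¹:F) • xh) (h1 : a * x1 = x1) (hs : x0 + xh + x1 = 0) :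
    x0 = 0 ∧ xh = 0 ∧ x1 = 0 := by
  have hi : (2⁻¹:F) ≠ 0 := inv_ne_zero h2
  have e1 : (2⁻¹:F) • xh + x1 = 0 := by
    have := congrArg (a * ·) hs
    simpa [mul_add, h0, hh, h1] using this
  have e2 : (2⁻¹ * 2⁻¹ : F) • xh + x1 = 0 := by
    have := congrArg (a * ·) e1
    simpa [mul_add, mul_smul_comm, hh, h1, smul_smul] using this
  have e3 : ((2⁻¹:F) - 2⁻¹ * 2⁻¹) • xh = 0 := by
    calc ((2⁻¹:F) - 2⁻¹ * 2⁻¹) • xh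
        = ((2⁻¹:F) • xh + x1) - ((2⁻¹*2⁻¹:F) • xh + x1) := by rw [sub_smul]; abel
      _ = 0 := by rw [e1, e2, sub_zero]
  have hc : ((2⁻¹:F) - 2⁻¹ * 2⁻¹) ≠ 0 := by
    have heq : (2⁻¹:F) - 2⁻¹*2⁻¹ = 2⁻¹*(1 - 2⁻¹) := by ring
    have h12 : (1:F) - 2⁻¹ = 2⁻¹ := by field_simp; norm_num
    rw [heq, h12]
    exact mul_ne_zero hi hi
  have hxh : xh = 0 := by
    rcases smul_eq_zero.mp e3 with h | h
    · exact absurd h hc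
    · exact h
  have hx1 : x1 = 0 := by rw [hxh, smul_zero, zero_add] at e1; exact e1
  have hx0 : x0 = 0 := by rw [hxh, hx1, add_zero, add_zero] at hs; exact hs
  exact ⟨hx0, hxh, hx1⟩

end AxialHelper

open AxialHelper in
open AxialPaper in
/-- Lemma `help`: components of a second axis relative to a first one. -/
theorem stmt0 {F : Type*} [Field F] {A : Type*} [NonUnitalNonAssocCommRing A]
    [Module F A] [SMulCommClass F A A] [IsScalarTower F A A]
    (h2 : (2 : F) ≠ 0)
    (hA : IsAxialJordanHalf F A)
    (Bf : A →ₗ[F] A →ₗ[F] F) (hB : IsFrobeniusForm F Bf)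
    (a b : A) (ha : IsPrimitiveAxis F a) (hb : IsPrimitiveAxis F b)
    (b0 bh : A)
    (hb0 : b0 ∈ evecIn F (Set.univ : Set A) a 0)
    (hbh : bh ∈ evecIn F (Set.univ : Set A) a (2⁻¹ : F))
    (hdec : b = b0 + bh + Bf a b • a) :
    b0 * b0 = (1 - Bf a b) • b0 ∧
    bh * bh = Bf a b • b0 + (Bf a b - Bf a b ^ 2) • a ∧
    b0 * bh = (2⁻¹ * (1 - Bf a b)) • bh := by

  obtain ⟨hBne, hsym, hinv, hax⟩ := hB
  set α : F := Bf a b with hα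
  have hi : (2⁻¹:F) ≠ 0 := inv_ne_zero h2
  have h21 : (2:F) * 2⁻¹ = 1 := mul_inv_cancel₀ h2
  -- basic multiplications
  have haa : a * a = a := ha.idem
  have hab0 : a * b0 = 0 := by simpa using hb0.2
  have habh : a * bh = (2⁻¹:F) • bh := hbh.2
  have hb0a : b0 * a = 0 := by rw [mul_comm]; exact hab0
  have hbha : bh * a = (2⁻¹:F) • bh := by rw [mul_comm]; exact habh
  -- fusion products
  obtain ⟨z0, hz0m, z1, hz1m, hbh2⟩ := ha.fusionhh bh hbh bh hbh
  have haz0 : a * z0 = 0 := by simpa using hz0m.2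
  have haz1 : a * z1 = z1 := by simpa using hz1m.2
  have haw : a * (b0 * b0) = 0 := by
    simpa using (ha.fusion00 b0 hb0 b0 hb0).2
  have hap : a * (b0 * bh) = (2⁻¹:F) • (b0 * bh) :=
    (ha.fusion0h b0 hb0 bh hbh).2
  -- expand b * b = b
  have hbb : b * b = b := hb.idem
  have main : (b0 * b0 + z0) + ((2:F) • (b0 * bh) + α • bh) + (z1 + (α*α) • a)
      = b0 + bh + α • a := by
    have step : (b0 + bh + α • a) * (b0 + bh + α • a)
        = b0 * b0 + bh * bh + (2:F) • (b0 * bh) + α • bh + (α*α) • a := by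
      have c1 : bh * b0 = b0 * bh := mul_comm _ _
      simp only [mul_add, add_mul, mul_smul_comm, smul_mul_assoc, haa, hab0, habh,
        hb0a, hbha, c1, smul_smul, smul_zero, mul_zero, zero_add, add_zero]
      match_scalars <;> (try field_simp) <;> ring
    calc (b0 * b0 + z0) + ((2:F) • (b0 * bh) + α • bh) + (z1 + (α*α) • a)
        = b0 * b0 + (z0 + z1) + (2:F) • (b0 * bh) + α • bh + (α*α) • a := by abel
      _ = b0 * b0 + bh * bh + (2:F) • (b0 * bh) + α • bh + (α*α) • a := by rw [hbh2]
      _ = (b0 + bh + α • a) * (b0 + bh + α • a) := step.symm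
      _ = b * b := by rw [← hdec]
      _ = b := hbb
      _ = b0 + bh + α • a := hdec
  have hsum : ((b0 * b0 + z0) - b0) + (((2:F) • (b0 * bh) + α • bh) - bh)
      + ((z1 + (α*α) • a) - α • a) = 0 := by
    calc ((b0 * b0 + z0) - b0) + (((2:F) • (b0 * bh) + α • bh) - bh)
          + ((z1 + (α*α) • a) - α • a)
        = ((b0 * b0 + z0) + ((2:F) • (b0 * bh) + α • bh) + (z1 + (α*α) • a))
            - (b0 + bh + α • a) := by abel
      _ = 0 := by rw [main, sub_self]
  -- eigencomponent membership of each bracket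
  have hm0 : a * ((b0 * b0 + z0) - b0) = 0 := by
    rw [mul_sub, mul_add, haw, haz0, hab0]; simp
  have hmh : a * (((2:F) • (b0 * bh) + α • bh) - bh)
      = (2⁻¹:F) • (((2:F) • (b0 * bh) + α • bh) - bh) := by
    rw [mul_sub, mul_add, mul_smul_comm, mul_smul_comm, hap, habh]
    match_scalars <;> ring
  have hm1 : a * ((z1 + (α*α) • a) - α • a) = (z1 + (α*α) • a) - α • a := by
    rw [mul_sub, mul_add, mul_smul_comm, mul_smul_comm, haz1, haa]
  obtain ⟨hX0, hXh, hX1⟩ := uniq3 h2 hm0 hmh hm1 hsum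
  -- the three component equations
  have hw : b0 * b0 = b0 - z0 :=
    eq_sub_of_add_eq (sub_eq_zero.mp hX0)
  have hpe : b0 * bh = (2⁻¹ * (1 - α)) • bh := by
    have h5 : (2:F) • (b0 * bh) = (1 - α) • bh := by
      have h := sub_eq_zero.mp hXh
      calc (2:F) • (b0 * bh) = ((2:F) • (b0 * bh) + α • bh) - α • bh := by abel
        _ = bh - α • bh := by rw [h]
        _ = (1 - α) • bh := by rw [sub_smul, one_smul]
    have h6 := congrArg (fun x => (2⁻¹:F) • x) h5
    simpa [smul_smul, inv_mul_cancel₀ h2] using h6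
  have hz1e : z1 = (α - α*α) • a := by
    have h := sub_eq_zero.mp hX1
    calc z1 = (z1 + (α*α) • a) - (α*α) • a := by abel
      _ = α • a - (α*α) • a := by rw [h]
      _ = (α - α*α) • a := by rw [sub_smul]
  -- products with b
  have hba : b * a = (2⁻¹:F) • bh + α • a := by
    conv_lhs => rw [hdec]
    rw [add_mul, add_mul, hb0a, hbha, smul_mul_assoc, haa]
    abel
  have hbbh : b * bh = z0 + (2⁻¹:F) • bh + (α - α*α) • a := by
    conv_lhs => rw [hdec]
    rw [add_mul, add_mul, hbh2, hz1e, hpe, smul_mul_assoc, habh, smul_smul]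
    match_scalars <;> (try field_simp) <;> ring
  -- the key relation from decomposing a with respect to b
  obtain ⟨y0, hy0m, yh, hyhm, y1, hy1m, hadec⟩ := hb.decomp a (Set.mem_univ a)
  obtain ⟨γ, hγ⟩ := hb.prim y1 hy1m
  have hby0 : b * y0 = 0 := by simpa using hy0m.2
  have hbyh : b * yh = (2⁻¹:F) • yh := hyhm.2
  have hBby0 : Bf b y0 = 0 := by
    calc Bf b y0 = Bf (b * b) y0 := by rw [hb.idem]
      _ = Bf b (b * y0) := hinv b b y0
      _ = 0 := by rw [hby0]; simp
  have hBbyh : Bf b yh = 0 := by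
    have h5 : Bf b yh = 2⁻¹ * Bf b yh := by
      calc Bf b yh = Bf (b * b) yh := by rw [hb.idem]
        _ = Bf b (b * yh) := hinv b b yh
        _ = 2⁻¹ * Bf b yh := by rw [hbyh]; simp
    have h6 : (2:F) * Bf b yh = Bf b yh := by
      conv_lhs => rw [h5]
      rw [← mul_assoc, h21, one_mul]
    linear_combination h6
  have hBbb : Bf b b = 1 := hax b hb
  have hγα : γ = α := by
    have : Bf b a = γ := by
      conv_lhs => rw [hadec, hγ]
      simp [hBby0, hBbyh, hBbb]
    rw [← this, hα, hsym a b]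
  -- identity  2 • (b * (b * a)) - b * a = α • b
  have hI : (2:F) • (b * (b * a)) - b * a = α • b := by
    have e1 : b * a = (2⁻¹:F) • yh + α • b := by
      conv_lhs => rw [hadec, hγ, hγα]
      rw [mul_add, mul_add, hby0, hbyh, mul_smul_comm, hb.idem]
      abel
    have e2 : b * (b * a) = (2⁻¹ * 2⁻¹:F) • yh + α • b := by
      rw [e1, mul_add, mul_smul_comm, mul_smul_comm, hbyh, hb.idem, smul_smul]
    rw [e2, e1]
    match_scalars <;> (try field_simp) <;> ring
  -- evaluate the key relation
  have hI2 : (2:F) • (b * (b * a)) - b * a = z0 + α • bh + (α*α) • a := by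
    have e3 : b * (b * a) = (2⁻¹:F) • (z0 + (2⁻¹:F) • bh + (α - α*α) • a)
        + α • ((2⁻¹:F) • bh + α • a) := by
      rw [hba, mul_add, mul_smul_comm, mul_smul_comm, hbbh, hba]
    rw [e3]
    rw [hba]
    match_scalars <;> (try field_simp) <;> ring
  have hz0e : z0 = α • b0 := by
    have h7 : z0 + α • bh + (α*α) • a = α • b0 + α • bh + (α*α) • a := by
      rw [← hI2, hI, hdec]
      match_scalars <;> ring
    exact add_right_cancel (add_right_cancel h7)
  refine ⟨?_, ?_, ?_⟩
  · rw [hw, hz0e]; match_scalars <;> ring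
  · rw [hbh2, hz0e, hz1e]; match_scalars <;> ring
  · exact hpe
end

section
/- Every definite primitive axial algebra of Jordan type 1/2 (over a field of characteristic not 2) is quasi-definite; that is, if the Frobenius form is anisotropic, then (a, b) = 1 for primitive axes a, b implies a = b. -/
open AxialPaper in
/-- Lemma `an`: every definite (anisotropic) axial algebra of Jordan
type 1/2 is quasi-definite. -/
theorem stmt3 {F : Type*} [Field F] {A : Type*} [NonUnitalNonAssocCommRing A]
    [Module F A] [SMulCommClass F A A] [IsScalarTower F A A]
    (h2 : (2 : F) ≠ 0)
    (hA : IsAxialJordanHalf F A)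
    (Bf : A →ₗ[F] A →ₗ[F] F) (hB : IsFrobeniusForm F Bf)
    (haniso : ∀ x : A, Bf x x = 0 → x = 0) :
    QuasiDefinite F Bf := by
  intro a b ha hb hab
  obtain ⟨-, hsymm, -, hunit⟩ := hB
  have h0 : Bf (b - a) (b - a) = 0 := by
    have hba : Bf b a = 1 := by rw [hsymm]; exact hab
    simp [map_sub, LinearMap.sub_apply, hunit a ha, hunit b hb, hab, hba]
  have := haniso _ h0
  exact (sub_eq_zero.mp this).symm
end

section
/- Let F be an infinite field of characteristic not 2. Then M_n(F), equipped with the Jordan product X ∘ Y = (XY + YX)/2, has a quasi-definite linear basis consisting of primitive axes: there exists a basis H_1, …, H_{n²} of M_n(F) such that each H_i satisfies H_i² = H_i and rank H_i = 1 (equivalently, each H_i is a primitive axis), tr(H_i H_i) = 1 for all i, and tr(H_i H_j) ≠ 1 for all i ≠ j. -/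
section Stmt5Aux

open Matrix Polynomial

variable {F : Type*} [Field F]

lemma vmv_mul_vmv {n : ℕ} (u v x y : Fin n → F) :
    vecMulVec u v * vecMulVec x y = (v ⬝ᵥ x) • vecMulVec u y := by
  ext i j
  simp only [mul_apply, vecMulVec_apply, Matrix.smul_apply, dotProduct, smul_eq_mul, Finset.sum_mul]
  apply Finset.sum_congr rfl
  intros; ring

lemma trace_vmv {n : ℕ} (u v : Fin n → F) : (vecMulVec u v).trace = u ⬝ᵥ v := by
  simp [Matrix.trace, Matrix.diag, vecMulVec_apply, dotProduct]

lemma rank_pos_of_ne_zero {n : ℕ} (H : Matrix (Fin n) (Fin n) F) (h : H ≠ 0) : 0 < H.rank := by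
  rcases Nat.eq_zero_or_pos H.rank with h0 | h0
  swap
  · exact h0
  exfalso
  apply h
  have : LinearMap.range H.mulVecLin = ⊥ := Submodule.finrank_eq_zero.mp h0
  have hz : H.mulVecLin = 0 := LinearMap.range_eq_bot.mp this
  ext i j
  have := congrFun (congrArg (fun f => f (Pi.single j 1)) (congrArg DFunLike.coe hz)) i
  simpa [Matrix.mulVecLin_apply, Matrix.mulVec_single] using this

lemma rank_vmv_le {n : ℕ} (u v : Fin n → F) : (vecMulVec u v).rank ≤ 1 := by
  rw [vecMulVec_eq (Fin 1)]
  exact le_trans (Matrix.rank_mul_le_left _ _) ((Matrix.rank_le_card_width (replicateCol (Fin 1) u)).trans (by simp))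

lemma vmv_off_aux {n : ℕ} (s t : F) {i j : Fin n} (hij : i ≠ j) :
    vecMulVec (fun k => (if i = k then (1:F) else 0) + t * (if j = k then 1 else 0))
      (fun l => (if i = l then (1:F) else 0) + s * (if j = l then 1 else 0)) =
    single i i 1 + s • single i j 1 + t • single j i 1 +
      (t * s) • single j j 1 := by
  ext k l
  simp only [Matrix.add_apply, Matrix.smul_apply, vecMulVec_apply, single,
    Matrix.of_apply, smul_eq_mul]
  by_cases h1 : i = k <;> by_cases h3 : i = l <;> by_cases h2 : j = k <;> by_cases h4 : j = l
  all_goals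
    first
      | exact absurd (h1.trans h2.symm) hij
      | exact absurd (h3.trans h4.symm) hij
      | (subst_vars; simp_all; try ring)


set_option maxHeartbeats 1000000 in
lemma key_aux {n : ℕ} (s t : F) (h2 : (2:F) ≠ 0)
    (ht0 : ¬t = 0) (ht1 : ¬t = 1) (htm1 : ¬t = -1)
    (hquad : t ^ 2 * s ^ 2 + t * s + 1 ≠ 0) (h2ts : 2 * t * s + 1 ≠ 0)
    (hts2 : t * s + 2 ≠ 0) (hts1 : t * s + 1 ≠ 0)
    (hsm1 : s + 1 ≠ 0) (hs1 : s - 1 ≠ 0) (hspt : s + t ≠ 0) (hs0 : s ≠ 0) (hst : s - t ≠ 0)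
    {i j k l : Fin n} (hne : ¬(i = k ∧ j = l)) :
    (1 + (if i = j then (0:F) else s) * (if i = j then 0 else t))⁻¹ *
    (1 + (if k = l then (0:F) else s) * (if k = l then 0 else t))⁻¹ *
    (((if i = k then (1:F) else 0) + (if k = l then (0:F) else t) * (if i = l then 1 else 0) +
      (if i = j then (0:F) else s) * (if j = k then 1 else 0) +
      (if i = j then (0:F) else s) * (if k = l then (0:F) else t) * (if j = l then 1 else 0)) *
     ((if k = i then (1:F) else 0) + (if i = j then (0:F) else t) * (if k = j then 1 else 0) +
      (if k = l then (0:F) else s) * (if l = i then 1 else 0) +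
      (if k = l then (0:F) else s) * (if i = j then (0:F) else t) * (if l = j then 1 else 0))) ≠ 1 := by
  by_cases h1 : i = j <;> by_cases hq2 : k = l <;> by_cases h3 : i = k <;>
    by_cases h4 : i = l <;> by_cases h5 : j = k <;> by_cases h6 : j = l <;>
    subst_vars <;> simp_all [eq_comm] <;> intro hEq <;>
    (have hd0 : (1:F) + s * t ≠ 0 := fun h => hts1 (by first
        | linear_combination h | linear_combination -h)) <;>
    field_simp at hEq <;>
    first
      | exact one_ne_zero (by first | linear_combination hEq | linear_combination -hEq)
      | exact hts1 (by first | linear_combination hEq | linear_combination -hEq)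
      | exact h2ts (by first | linear_combination hEq | linear_combination -hEq)
      | exact hquad (by first | linear_combination hEq | linear_combination -hEq)
      | (have hz0 : (t*s)*(t*s+2) = 0 := by
            first | linear_combination hEq | linear_combination -hEq
         rcases mul_eq_zero.mp hz0 with hz | hz
         · rcases mul_eq_zero.mp hz with hz' | hz'
           · exact ht0 (by first | linear_combination hz' | linear_combination -hz')
           · exact hs0 (by first | linear_combination hz' | linear_combination -hz')
         · exact hts2 (by first | linear_combination hz | linear_combination -hz))
      | (have hz0 : ((s-1)*(s+1))*((t-1)*(t+1)) = 0 := by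
            first | linear_combination hEq | linear_combination -hEq
         rcases mul_eq_zero.mp hz0 with hz | hz
         · rcases mul_eq_zero.mp hz with hz' | hz'
           · exact hs1 (by first | linear_combination hz' | linear_combination -hz')
           · exact hsm1 (by first | linear_combination hz' | linear_combination -hz')
         · rcases mul_eq_zero.mp hz with hz' | hz'
           · exact ht1 (by first | linear_combination hz' | linear_combination -hz')
           · exact htm1 (by first | linear_combination hz' | linear_combination -hz'))

end Stmt5Aux

open Matrix Polynomial in
/-- over an infinite field `F` (of characteristic not 2), the Jordan matrix
algebra `M_n^{(+)}(F)` has a quasi-definite basis of primitive axes, i.e. a linear basis of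
rank-one idempotents `H_i` with `tr(H_i H_i) = 1` and `tr(H_i H_j) ≠ 1` for `i ≠ j`. -/
theorem stmt5 {F : Type*} [Field F] [Infinite F] (h2 : (2 : F) ≠ 0) (n : ℕ) :
    ∃ b : Module.Basis (Fin (n ^ 2)) F (Matrix (Fin n) (Fin n) F),
      (∀ i, b i * b i = b i) ∧
      (∀ i, (b i).rank = 1) ∧
      (∀ i, Matrix.trace (b i * b i) = 1) ∧
      (∀ i j, i ≠ j → Matrix.trace (b i * b j) ≠ 1) := by
  classical
  obtain ⟨t, ht⟩ := Infinite.exists_notMem_finset ({0, 1, -1} : Finset F)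
  simp only [Finset.mem_insert, Finset.mem_singleton, not_or] at ht
  obtain ⟨ht0, ht1, htm1⟩ := ht
  have hC1 : ∀ (p : F[X]), p.coeff 0 ≠ 0 → p ≠ 0 := fun p hp h => hp (by simp [h])
  set Q : F[X] := X * (X - C t) * (X + C t) * (X - C 1) * (X + C 1) * (C t * X + 1) *
      (C t * X + C 2) * (C (2 * t) * X + 1) * (C (t ^ 2) * X ^ 2 + C t * X + 1) with hQdef
  have hQ : Q ≠ 0 := by
    refine mul_ne_zero (mul_ne_zero (mul_ne_zero (mul_ne_zero (mul_ne_zero (mul_ne_zero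
      (mul_ne_zero (mul_ne_zero X_ne_zero ?_) ?_) ?_) ?_) ?_) ?_) ?_) ?_ <;>
      apply hC1 <;> simp [ht0, h2, htm1, sub_eq_zero]
  obtain ⟨s, hs⟩ := Q.exists_eval_ne_zero_of_natDegree_lt_card hQ
    ((Cardinal.nat_lt_aleph0 _).trans_le (Cardinal.infinite_iff.mp inferInstance))
  rw [hQdef] at hs
  simp only [eval_mul, eval_add, eval_sub, eval_X, eval_C, eval_one, eval_pow,
    mul_ne_zero_iff] at hs
  obtain ⟨⟨⟨⟨⟨⟨⟨⟨hs0, hst⟩, hspt⟩, hs1⟩, hsm1⟩, hts1⟩, hts2⟩, h2ts⟩, hquad⟩ := hs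
  have key : ∀ x y : Fin n, (∑ i, (if x = i then (1:F) else 0) * (if y = i then 1 else 0))
      = if x = y then 1 else 0 := by
    intro x y
    simp only [ite_mul, one_mul, zero_mul, Finset.sum_ite_eq, Finset.mem_univ, if_true]
    simp [eq_comm]
  set a : Fin n × Fin n → F := fun p => if p.1 = p.2 then 0 else t with ha
  set bb : Fin n × Fin n → F := fun p => if p.1 = p.2 then 0 else s with hbb
  set u : Fin n × Fin n → (Fin n → F) :=
    fun p i => (if p.1 = i then 1 else 0) + a p * (if p.2 = i then 1 else 0) with hu
  set v : Fin n × Fin n → (Fin n → F) :=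
    fun p i => (if p.1 = i then 1 else 0) + bb p * (if p.2 = i then 1 else 0) with hv
  set d : Fin n × Fin n → F := fun p => 1 + bb p * a p with hdd
  set H : Fin n × Fin n → Matrix (Fin n) (Fin n) F :=
    fun p => (d p)⁻¹ • vecMulVec (u p) (v p) with hH
  have hd : ∀ p, d p ≠ 0 := by
    intro p
    by_cases hp : p.1 = p.2 <;> simp [hdd, hbb, ha, hp]
    intro h; apply hts1; linear_combination h
  have hdot : ∀ p q, v p ⬝ᵥ u q =
      (if p.1 = q.1 then 1 else 0) + a q * (if p.1 = q.2 then 1 else 0) +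
      bb p * (if p.2 = q.1 then 1 else 0) + bb p * a q * (if p.2 = q.2 then 1 else 0) := by
    intro p q
    calc v p ⬝ᵥ u q = ∑ i, ((if p.1 = i then (1:F) else 0) * (if q.1 = i then 1 else 0)
        + a q * ((if p.1 = i then 1 else 0) * (if q.2 = i then 1 else 0))
        + bb p * ((if p.2 = i then 1 else 0) * (if q.1 = i then 1 else 0))
        + bb p * a q * ((if p.2 = i then 1 else 0) * (if q.2 = i then 1 else 0))) := by
          apply Finset.sum_congr rfl; intro i _
          simp only [hu, hv, dotProduct]; ring
      _ = _ := by
          simp only [Finset.sum_add_distrib, ← Finset.mul_sum, key]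
  have hvu : ∀ p, v p ⬝ᵥ u p = d p := by
    intro p
    have := hdot p p
    by_cases hp : p.1 = p.2
    · simp only [hdd, ha, hbb, hp] at this ⊢
      simpa using this
    · have hp' : ¬ p.2 = p.1 := fun h => hp h.symm
      simp only [hdd, ha, hbb, hp, hp', if_true, if_false, if_neg] at this ⊢
      simpa using this
  have hmul : ∀ p q, H p * H q = ((d p)⁻¹ * (d q)⁻¹ * (v p ⬝ᵥ u q)) • vecMulVec (u p) (v q) := by
    intro p q
    rw [hH]
    simp only [smul_mul_assoc, mul_smul_comm, vmv_mul_vmv, smul_smul]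
    congr 1
    ring
  have htr : ∀ p q, (H p * H q).trace =
      (d p)⁻¹ * (d q)⁻¹ * ((v p ⬝ᵥ u q) * (v q ⬝ᵥ u p)) := by
    intro p q
    rw [hmul, trace_smul, trace_vmv, smul_eq_mul, dotProduct_comm (u p) (v q)]
    ring
  have hidem : ∀ p, H p * H p = H p := by
    intro p
    rw [hmul, hvu, hH]
    congr 1
    field_simp [hd p]
  have htr1 : ∀ p, (H p * H p).trace = 1 := by
    intro p
    rw [htr, hvu]
    field_simp [hd p]
  have hu1 : ∀ p, u p p.1 = 1 ∧ v p p.1 = 1 := by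
    intro p
    by_cases hp : p.1 = p.2
    · constructor <;> simp [hu, hv, ha, hbb, hp]
    · have hp' : ¬ p.2 = p.1 := fun h => hp h.symm
      constructor <;> simp [hu, hv, ha, hbb, hp, hp']
  have hH0 : ∀ p, H p ≠ 0 := by
    intro p h
    have := congrFun (congrFun h p.1) p.1
    simp only [hH, Matrix.smul_apply, vecMulVec_apply, (hu1 p).1, (hu1 p).2, mul_one,
      smul_eq_mul, Matrix.zero_apply] at this
    exact inv_ne_zero (hd p) this
  have hsmv : ∀ (c : F) (x y : Fin n → F), c • vecMulVec x y = vecMulVec (c • x) y := by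
    intro c x y
    ext i j
    simp only [Matrix.smul_apply, vecMulVec_apply, Pi.smul_apply, smul_eq_mul]
    ring
  have hrank : ∀ p, (H p).rank = 1 := by
    intro p
    refine le_antisymm ?_ (rank_pos_of_ne_zero _ (hH0 p))
    rw [hH]
    show ((d p)⁻¹ • vecMulVec (u p) (v p)).rank ≤ 1
    rw [hsmv]
    exact rank_vmv_le _ _
  have hdiag : ∀ i : Fin n, H (i, i) = single i i 1 := by
    intro i
    ext k l
    show (d (i,i))⁻¹ * (u (i,i) k * v (i,i) l) = _
    by_cases hik : i = k <;> by_cases hil : i = l <;>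
      simp [hu, hv, ha, hbb, hdd, single, hik, hil]
  have hoff : ∀ i j : Fin n, i ≠ j → (d (i, j)) • H (i, j) =
      single i i 1 + s • single i j 1 + t • single j i 1 +
        (t * s) • single j j 1 := by
    intro i j hij
    have : (d (i, j)) • H (i, j) = vecMulVec (u (i,j)) (v (i,j)) := by
      rw [hH]
      show d (i,j) • ((d (i,j))⁻¹ • _) = _
      rw [smul_smul, mul_inv_cancel₀ (hd _), one_smul]
    rw [this]
    have hu' : u (i, j) = fun k => (if i = k then (1:F) else 0) + t * (if j = k then 1 else 0) := by
      funext k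
      simp [hu, ha, hij]
    have hv' : v (i, j) = fun l => (if i = l then (1:F) else 0) + s * (if j = l then 1 else 0) := by
      funext l
      simp [hv, hbb, hij]
    rw [hu', hv', vmv_off_aux s t hij]
  set Sp := Submodule.span F (Set.range H) with hSp
  have hmem : ∀ p, H p ∈ Sp := fun p => Submodule.subset_span ⟨p, rfl⟩
  have hA : ∀ (i j : Fin n), i ≠ j →
      s • single i j (1:F) + t • single j i 1 ∈ Sp := by
    intro i j hij
    have heq : s • single i j (1:F) + t • single j i 1
        = d (i,j) • H (i,j) - H (i,i) - (t*s) • H (j,j) := by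
      rw [hoff i j hij, hdiag, hdiag]
      module
    rw [heq]
    exact Submodule.sub_mem _ (Submodule.sub_mem _ (Submodule.smul_mem _ _ (hmem _)) (hmem _))
      (Submodule.smul_mem _ _ (hmem _))
  have hst2 : s^2 - t^2 ≠ 0 := by
    intro h
    exact mul_ne_zero hst hspt (by linear_combination h)
  have hstd : ∀ i j : Fin n, single i j (1:F) ∈ Sp := by
    intro i j
    by_cases hij : i = j
    · subst hij
      rw [← hdiag i]
      exact hmem _
    · have heq : single i j (1:F) =
          ((s^2 - t^2)⁻¹ * s) • (s • single i j (1:F) + t • single j i 1) +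
          (-((s^2 - t^2)⁻¹ * t)) • (s • single j i (1:F) + t • single i j 1) := by
        match_scalars <;> field_simp <;> ring
      rw [heq]
      exact Submodule.add_mem _ (Submodule.smul_mem _ _ (hA i j hij))
        (Submodule.smul_mem _ _ (hA j i (Ne.symm hij)))
  have hspan : ⊤ ≤ Sp := by
    rw [← Module.Basis.span_eq (Matrix.stdBasis F (Fin n) (Fin n))]
    apply Submodule.span_le.mpr
    rintro x ⟨⟨i, j⟩, rfl⟩
    rw [Matrix.stdBasis_eq_single]
    exact hstd i j
  have hcard : Fintype.card (Fin n × Fin n) = Module.finrank F (Matrix (Fin n) (Fin n) F) := by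
    simp [Module.finrank_matrix]
  let b0 := basisOfTopLeSpanOfCardEqFinrank H hspan hcard
  have hb0 : ⇑b0 = H := coe_basisOfTopLeSpanOfCardEqFinrank _ _ _
  have key : ∀ p q : Fin n × Fin n, p ≠ q → (H p * H q).trace ≠ 1 := by
    rintro ⟨i, j⟩ ⟨k, l⟩ hne
    rw [htr, hdot, hdot]
    have hne' : ¬(i = k ∧ j = l) := fun h => hne (by rw [h.1, h.2])
    have := key_aux (n := n) s t h2 ht0 ht1 htm1 hquad h2ts hts2 hts1 hsm1 hs1 hspt hs0 hst hne'
    simpa only [ha, hbb, hdd] using this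
  let e : Fin n × Fin n ≃ Fin (n ^ 2) := finProdFinEquiv.trans (finCongr (by ring))
  refine ⟨b0.reindex e, ?_, ?_, ?_, ?_⟩ <;>
    simp only [Module.Basis.reindex_apply, hb0]
  · exact fun i => hidem _
  · exact fun i => hrank _
  · exact fun i => htr1 _
  · exact fun i j hij => key _ _ (fun h => hij (by
      have := congrArg e h
      simpa using this))
end

section
/- Let A be a primitive axial algebra of Jordan type 1/2 over a field F of characteristic not 2, and let a, b be primitive axes in A with (a, b) ≠ 1. Set x_a(b) = (2ab − (a,b)·a − b)/((a,b) − 1). Then: (1) x_a(b) is an idempotent; (2) a + x_a(b) is a unit of the subalgebra of A generated by a and b; (3) (x_a(b), x_a(b)) = 1. -/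
section Aux
open AxialPaper
variable {F : Type*} [Field F] {A : Type*} [NonUnitalNonAssocCommRing A]
  [Module F A] [SMulCommClass F A A] [IsScalarTower F A A]

/-- Decomposition of `b` with respect to a primitive axis `a`, with the
1-part identified as `(Bf a b) • a` using the Frobenius form. -/
lemma aux_decomp (h2 : (2 : F) ≠ 0) (Bf : A →ₗ[F] A →ₗ[F] F) (hB : IsFrobeniusForm F Bf)
    {a : A} (ha : IsPrimitiveAxis F a) (b : A) :
    ∃ c0 ch : A, a * c0 = 0 ∧ a * ch = (2⁻¹ : F) • ch ∧ b = c0 + ch + Bf a b • a := by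
  obtain ⟨hBne, hBsymm, hBinv, hBax⟩ := hB
  obtain ⟨c0, hc0, ch, hch, c1, hc1, hdec⟩ := ha.decomp b (Set.mem_univ b)
  obtain ⟨c, hc⟩ := ha.prim c1 hc1
  have hac0 : a * c0 = 0 := by simpa using hc0.2
  have hach : a * ch = (2⁻¹ : F) • ch := hch.2
  have hBaa : Bf a a = 1 := hBax a ha
  have h1 : Bf a c0 = 0 := by
    have h := hBinv a a c0
    rw [ha.idem, hac0] at h
    simpa using h
  have hh : Bf a ch = 0 := by
    have h := hBinv a a ch
    rw [ha.idem, hach] at h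
    simp only [map_smul, smul_eq_mul] at h
    field_simp at h
    linear_combination h
  have hcval : Bf a b = c := by
    rw [hdec, hc]
    simp [h1, hh, hBaa]
  refine ⟨c0, ch, hac0, hach, ?_⟩
  rw [hcval, hdec, hc]

/-- `b (ab) = (1/2)(ab) + ((a,b)/2) b` : from the decomposition of `a` w.r.t. `b`. -/
lemma aux_bab (h2 : (2 : F) ≠ 0) (Bf : A →ₗ[F] A →ₗ[F] F) (hB : IsFrobeniusForm F Bf)
    {a b : A} (ha : IsPrimitiveAxis F a) (hb : IsPrimitiveAxis F b) :
    b * (a * b) = (2⁻¹ : F) • (a * b) + (2⁻¹ * Bf a b) • b := by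
  obtain ⟨d0, dh, hbd0, hbdh, hadec⟩ := aux_decomp h2 Bf hB hb a
  have hsym : Bf b a = Bf a b := hB.2.1 b a
  rw [hsym] at hadec
  have hba : a * b = (2⁻¹ : F) • dh + Bf a b • b := by
    calc a * b = b * a := mul_comm a b
    _ = b * (d0 + dh + Bf a b • b) := by rw [← hadec]
    _ = (2⁻¹ : F) • dh + Bf a b • b := by
        rw [mul_add, mul_add, hbd0, hbdh, mul_smul_comm, hb.idem, zero_add]
  rw [hba, mul_add, mul_smul_comm, mul_smul_comm, hbdh, hb.idem]
  match_scalars <;> (field_simp; try ring; try tauto)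

/-- Uniqueness of eigencomponents for eigenvalues `0, 1/2, 1`. -/
lemma aux_unique (h2 : (2 : F) ≠ 0) {a u0 uh u1 : A}
    (h0 : a * u0 = 0) (hh : a * uh = (2⁻¹ : F) • uh) (h1 : a * u1 = u1)
    (hsum : u0 + uh + u1 = 0) :
    u0 = 0 ∧ uh = 0 ∧ u1 = 0 := by
  have e1 : (2⁻¹ : F) • uh + u1 = 0 := by
    have h := congrArg (a * ·) hsum
    simpa [mul_add, h0, hh, h1] using h
  have e2 : ((2⁻¹ : F) * 2⁻¹) • uh + u1 = 0 := by
    have h := congrArg (a * ·) e1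
    simpa [mul_add, mul_smul_comm, hh, h1, smul_smul] using h
  have e3 : ((2⁻¹ : F) - 2⁻¹ * 2⁻¹) • uh = 0 := by
    have := sub_eq_zero.mpr (e1.trans e2.symm)
    rw [add_sub_add_right_eq_sub, ← sub_smul] at this
    exact this
  have hc : ((2⁻¹ : F) - 2⁻¹ * 2⁻¹) ≠ 0 := by
    field_simp
    norm_num
    rw [show (4 : F) = 2 * 2 by norm_num]; exact mul_ne_zero h2 h2
  have huh : uh = 0 := by
    rcases smul_eq_zero.mp e3 with h | h
    · exact absurd h hc
    · exact h
  have hu1 : u1 = 0 := by simpa [huh] using e1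
  have hu0 : u0 = 0 := by simpa [huh, hu1] using hsum
  exact ⟨hu0, huh, hu1⟩

end Aux

open AxialPaper in
/-- Lemma `id`: `x_a(b)` is an idempotent of norm 1, and `a + x_a(b)` is a
unit of the subalgebra generated by `a` and `b`. -/
theorem stmt6 {F : Type*} [Field F] {A : Type*} [NonUnitalNonAssocCommRing A]
    [Module F A] [SMulCommClass F A A] [IsScalarTower F A A]
    (h2 : (2 : F) ≠ 0)
    (hA : IsAxialJordanHalf F A)
    (Bf : A →ₗ[F] A →ₗ[F] F) (hB : IsFrobeniusForm F Bf)
    (a b : A) (ha : IsPrimitiveAxis F a) (hb : IsPrimitiveAxis F b)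
    (hab : Bf a b ≠ 1) :
    xab F Bf a b * xab F Bf a b = xab F Bf a b ∧
    a + xab F Bf a b ∈ NonUnitalAlgebra.adjoin F ({a, b} : Set A) ∧
    (∀ z ∈ NonUnitalAlgebra.adjoin F ({a, b} : Set A), (a + xab F Bf a b) * z = z) ∧
    Bf (xab F Bf a b) (xab F Bf a b) = 1 := by
  obtain ⟨hBne, hBsymm, hBinv, hBax⟩ := hB
  have hB' : IsFrobeniusForm F Bf := ⟨hBne, hBsymm, hBinv, hBax⟩
  set π := Bf a b with hπ
  have hπ1 : (1 : F) - π ≠ 0 := sub_ne_zero.mpr (Ne.symm hab)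
  obtain ⟨c0, ch, hac0, hach, hbdec⟩ := aux_decomp h2 Bf hB' ha b
  rw [← hπ] at hbdec
  have hbab : b * (a * b) = (2⁻¹ : F) • (a * b) + (2⁻¹ * π) • b := by
    have h := aux_bab h2 Bf hB' ha hb
    rw [← hπ] at h; exact h
  have hab1 : a * b = (2⁻¹ : F) • ch + π • a := by
    conv_lhs => rw [hbdec]
    rw [mul_add, mul_add, hac0, hach, mul_smul_comm, ha.idem, zero_add]
  have hca0 : c0 * a = 0 := by rw [mul_comm]; exact hac0
  have hcha : ch * a = (2⁻¹ : F) • ch := by rw [mul_comm]; exact hach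
  have hch_eq : ch = (2 : F) • (a * b) - (2 * π) • a := by
    rw [hab1]; match_scalars <;> (field_simp; try ring; try tauto)
  -- fusion data
  have hc0mem : c0 ∈ evecIn F Set.univ a 0 := ⟨Set.mem_univ _, by rw [hac0, zero_smul]⟩
  have hchmem : ch ∈ evecIn F Set.univ a (2⁻¹ : F) := ⟨Set.mem_univ _, hach⟩
  have hacch : a * (c0 * ch) = (2⁻¹ : F) • (c0 * ch) :=
    (ha.fusion0h c0 hc0mem ch hchmem).2
  obtain ⟨z0, hz0m, z1, hz1m, hchch⟩ := ha.fusionhh ch hchmem ch hchmem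
  have haz0 : a * z0 = 0 := by simpa using hz0m.2
  have haz1 : a * z1 = z1 := by simpa using hz1m.2
  -- two computations of b * ch
  have E1 : b * ch = c0 * ch + (z0 + z1) + (2⁻¹ * π) • ch := by
    conv_lhs => rw [hbdec]
    rw [add_mul, add_mul, smul_mul_assoc, hchch, hach]
    module
  have E2 : b * ch = π • c0 + (2⁻¹ : F) • ch + (π - π * π) • a := by
    have t1 : b * ch = (2 : F) • (b * (a * b)) - (2 * π) • (b * a) := by
      rw [hch_eq, mul_sub, mul_smul_comm, mul_smul_comm]
    rw [t1, mul_comm b a, hbab, hab1, hbdec]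
    match_scalars <;> (field_simp; try ring; try tauto)
  have key : c0 * ch + (z0 + z1) + (2⁻¹ * π) • ch
      = π • c0 + (2⁻¹ : F) • ch + (π - π * π) • a := E1.symm.trans E2
  have hu0 : a * (z0 - π • c0) = 0 := by
    rw [mul_sub, haz0, mul_smul_comm, hac0, smul_zero, sub_zero]
  have huh : a * (c0 * ch - (2⁻¹ - 2⁻¹ * π) • ch)
      = (2⁻¹ : F) • (c0 * ch - (2⁻¹ - 2⁻¹ * π) • ch) := by
    rw [mul_sub, hacch, mul_smul_comm, hach]
    module
  have hu1 : a * (z1 - (π - π * π) • a) = z1 - (π - π * π) • a := by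
    rw [mul_sub, haz1, mul_smul_comm, ha.idem]
  have hsum0 : (z0 - π • c0) + (c0 * ch - (2⁻¹ - 2⁻¹ * π) • ch)
      + (z1 - (π - π * π) • a) = 0 := by
    linear_combination (norm := module) key
  obtain ⟨q0, qh, q1⟩ := aux_unique h2 hu0 huh hu1 hsum0
  have hcch : c0 * ch = ((2⁻¹ : F) - 2⁻¹ * π) • ch := sub_eq_zero.mp qh
  have hz0v : z0 = π • c0 := sub_eq_zero.mp q0
  have hz1v : z1 = (π - π * π) • a := sub_eq_zero.mp q1
  have hchsq : ch * ch = π • c0 + (π - π * π) • a := by rw [hchch, hz0v, hz1v]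
  have hchc0 : ch * c0 = ((2⁻¹ : F) - 2⁻¹ * π) • ch := by rw [mul_comm]; exact hcch
  -- c0 squared
  have hc0sq : c0 * c0 = ((1 : F) - π) • c0 := by
    have hb2 := hb.idem
    rw [hbdec] at hb2
    simp only [mul_add, add_mul, smul_mul_assoc, mul_smul_comm, hac0, hach, hca0, hcha,
      hchc0, hcch, hchsq, ha.idem, smul_zero, add_zero, zero_add] at hb2
    linear_combination (norm := match_scalars <;> (field_simp; try ring; try tauto)) hb2
  -- value of xab
  have hxv : xab F Bf a b = ((1 : F) - π)⁻¹ • c0 := by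
    have hinv : (π - 1 : F)⁻¹ = -((1 : F) - π)⁻¹ := by
      rw [show (π - 1 : F) = -(1 - π) by ring, inv_neg]
    simp only [xab]
    rw [← hπ, hinv, hab1, hbdec]
    match_scalars <;> (field_simp; try ring; try tauto)
  -- (1) idempotent
  have hidem : xab F Bf a b * xab F Bf a b = xab F Bf a b := by
    rw [hxv, smul_mul_smul_comm, hc0sq]
    match_scalars <;> (field_simp; try ring; try tauto)
  -- (3) norm one
  have hBaa : Bf a a = 1 := hBax a ha
  have hBbb : Bf b b = 1 := hBax b hb
  have hBac0 : Bf a c0 = 0 := by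
    have h := hBinv a a c0; rw [ha.idem, hac0] at h; simpa using h
  have hBach : Bf a ch = 0 := by
    have h := hBinv a a ch; rw [ha.idem, hach] at h
    simp only [map_smul, smul_eq_mul] at h
    field_simp at h; linear_combination h
  have hBc0ch : Bf c0 ch = 0 := by
    have h := hBinv c0 a ch
    rw [hca0, hach] at h
    simp only [map_zero, LinearMap.zero_apply, map_smul, smul_eq_mul] at h
    field_simp at h
    linear_combination -h
  have hBchch : Bf ch ch = 2 * (π - π * π) := by
    have h := hBinv a ch ch
    rw [hach, hchsq] at h
    simp only [map_add, map_smul, smul_eq_mul, LinearMap.smul_apply, LinearMap.add_apply,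
      LinearMap.map_smulₛₗ, RingHom.id_apply] at h
    rw [hBac0, hBaa] at h
    field_simp at h; linear_combination h
  have hBc0c0 : Bf c0 c0 = ((1 : F) - π) * (1 - π) := by
    have h := hBbb
    rw [hbdec] at h
    simp only [map_add, map_smul, LinearMap.add_apply, LinearMap.smul_apply, smul_eq_mul] at h
    rw [hBsymm c0 a, hBsymm ch a, hBsymm ch c0] at h
    rw [hBac0, hBach, hBc0ch, hBchch, hBaa] at h
    linear_combination h
  have hnorm : Bf (xab F Bf a b) (xab F Bf a b) = 1 := by
    rw [hxv]
    simp only [map_smul, LinearMap.smul_apply, smul_eq_mul]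
    rw [hBc0c0]
    field_simp
  -- (2) unit of the subalgebra generated by a and b
  have haab : a * (a * b) = (2⁻¹ : F) • (a * b) + (2⁻¹ * π) • a := by
    rw [hab1, mul_add, mul_smul_comm, mul_smul_comm, hach, ha.idem]
    match_scalars <;> (field_simp; try ring; try tauto)
  have hss : (a * b) * (a * b)
      = (2⁻¹ * (2⁻¹ * π)) • a + (2⁻¹ * (2⁻¹ * π)) • b + (2⁻¹ * π) • (a * b) := by
    rw [hab1, hbdec]
    simp only [add_mul, mul_add, smul_mul_assoc, mul_smul_comm, hach, hcha, ha.idem,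
      hchsq, hac0, hca0, smul_zero, add_zero, zero_add]
    match_scalars <;> (field_simp; try ring; try tauto)
  have hua : (a + xab F Bf a b) * a = a := by
    rw [hxv, add_mul, smul_mul_assoc, hca0, smul_zero, add_zero, ha.idem]
  have hub : (a + xab F Bf a b) * b = b := by
    rw [hxv, hbdec]
    simp only [add_mul, mul_add, smul_mul_assoc, mul_smul_comm, hac0, hach, hca0, hcha,
      ha.idem, hc0sq, hcch, smul_zero, add_zero, zero_add]
    match_scalars <;> (field_simp; try ring; try tauto)
  have hus : (a + xab F Bf a b) * (a * b) = a * b := by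
    rw [hxv, hab1]
    simp only [add_mul, mul_add, smul_mul_assoc, mul_smul_comm, hac0, hach, hca0, hcha,
      ha.idem, hcch, smul_zero, add_zero, zero_add]
    match_scalars <;> (field_simp; try ring; try tauto)
  have hamem : a ∈ NonUnitalAlgebra.adjoin F ({a, b} : Set A) :=
    NonUnitalAlgebra.subset_adjoin F (Set.mem_insert a {b})
  have hbmem : b ∈ NonUnitalAlgebra.adjoin F ({a, b} : Set A) :=
    NonUnitalAlgebra.subset_adjoin F (Set.mem_insert_of_mem a rfl)
  have habmem : a * b ∈ NonUnitalAlgebra.adjoin F ({a, b} : Set A) := mul_mem hamem hbmem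
  have hxmem : xab F Bf a b ∈ NonUnitalAlgebra.adjoin F ({a, b} : Set A) := by
    simp only [xab]
    exact SMulMemClass.smul_mem _
      (sub_mem (sub_mem (SMulMemClass.smul_mem _ habmem) (SMulMemClass.smul_mem _ hamem)) hbmem)
  -- the span of a, b, ab is a subalgebra
  set M : Submodule F A := Submodule.span F ({a, b, a * b} : Set A) with hM
  have hmema : a ∈ M := Submodule.subset_span (by simp)
  have hmemb : b ∈ M := Submodule.subset_span (by simp)
  have hmemab : a * b ∈ M := Submodule.subset_span (by simp)
  have hgen : ∀ x ∈ ({a, b, a * b} : Set A), ∀ y ∈ ({a, b, a * b} : Set A), x * y ∈ M := by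
    intro x hx y hy
    simp only [Set.mem_insert_iff, Set.mem_singleton_iff] at hx hy
    rcases hx with rfl | rfl | rfl <;> rcases hy with rfl | rfl | rfl
    · rw [ha.idem]; exact hmema
    · exact hmemab
    · rw [haab]; exact M.add_mem (M.smul_mem _ hmemab) (M.smul_mem _ hmema)
    · rw [mul_comm]; exact hmemab
    · rw [hb.idem]; exact hmemb
    · rw [hbab]; exact M.add_mem (M.smul_mem _ hmemab) (M.smul_mem _ hmemb)
    · rw [mul_comm, haab]; exact M.add_mem (M.smul_mem _ hmemab) (M.smul_mem _ hmema)
    · rw [mul_comm, hbab]; exact M.add_mem (M.smul_mem _ hmemab) (M.smul_mem _ hmemb)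
    · rw [hss]
      exact M.add_mem (M.add_mem (M.smul_mem _ hmema) (M.smul_mem _ hmemb)) (M.smul_mem _ hmemab)
  have hmul : ∀ x y : A, x ∈ M → y ∈ M → x * y ∈ M := by
    intro x y hx hy
    induction hy using Submodule.span_induction with
    | mem z hz =>
      induction hx using Submodule.span_induction with
      | mem w hw => exact hgen w hw z hz
      | zero => rw [zero_mul]; exact M.zero_mem
      | add u v hu hv hiu hiv => rw [add_mul]; exact M.add_mem hiu hiv
      | smul c u hu hiu => rw [smul_mul_assoc]; exact M.smul_mem c hiu
    | zero => rw [mul_zero]; exact M.zero_mem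
    | add u v hu hv hiu hiv => rw [mul_add]; exact M.add_mem hiu hiv
    | smul c u hu hiu => rw [mul_smul_comm]; exact M.smul_mem c hiu
  have hle : NonUnitalAlgebra.adjoin F ({a, b} : Set A)
      ≤ M.toNonUnitalSubalgebra (fun x y hx hy => hmul x y hx hy) := by
    apply NonUnitalAlgebra.adjoin_le
    intro x hx
    simp only [Set.mem_insert_iff, Set.mem_singleton_iff] at hx
    rcases hx with rfl | rfl
    · exact hmema
    · exact hmemb
  have hrun : ∀ z ∈ NonUnitalAlgebra.adjoin F ({a, b} : Set A),
      (a + xab F Bf a b) * z = z := by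
    intro z hz
    have hzM : z ∈ M := hle hz
    clear hz
    induction hzM using Submodule.span_induction with
    | mem w hw =>
      simp only [Set.mem_insert_iff, Set.mem_singleton_iff] at hw
      rcases hw with rfl | rfl | rfl
      · exact hua
      · exact hub
      · exact hus
    | zero => rw [mul_zero]
    | add u v hu hv hiu hiv => rw [mul_add, hiu, hiv]
    | smul c u hu hiu => rw [mul_smul_comm, hiu]
  exact ⟨hidem, add_mem hamem hxmem, hrun, hnorm⟩
end

section
/- Let A be a primitive axial algebra of Jordan type 1/2 over a field F of characteristic not 2, and suppose A has a quasi-definite linear basis B consisting of primitive axes. Fix a ∈ B and set B_0 = {x_a(y) : y ∈ B \ {a}} (each x_a(y) is defined since (a,y) ≠ 1). Then the linear span of B_0 equals A_0(a). -/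
open AxialPaper in
/-- Lemma `bazis`: if `A` has a quasi-definite basis `B` of primitive axes
and `a ∈ B`, then the span of `B_0 = {x_a(y) : y ∈ B, y ≠ a}` equals `A_0(a)`. -/
theorem stmt9 {F : Type*} [Field F] {A : Type*} [NonUnitalNonAssocCommRing A]
    [Module F A] [SMulCommClass F A A] [IsScalarTower F A A]
    (h2 : (2 : F) ≠ 0)
    (hA : IsAxialJordanHalf F A)
    (Bf : A →ₗ[F] A →ₗ[F] F) (hB : IsFrobeniusForm F Bf)
    (ι : Type*) (bb : Module.Basis ι F A)
    (hax : ∀ i, IsPrimitiveAxis F (bb i))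
    (hqd : ∀ i j, i ≠ j → Bf (bb i) (bb j) ≠ 1)
    (i0 : ι) :
    Submodule.span F {x : A | ∃ j : ι, j ≠ i0 ∧ x = xab F Bf (bb i0) (bb j)}
      = evecSub F (bb i0) 0 := by

  classical
  obtain ⟨hBne, hsymm, hinv, hnorm⟩ := hB
  set a := bb i0 with ha_def
  have ha := hax i0
  have haa : a * a = a := ha.idem
  have hBaa : Bf a a = 1 := hnorm a ha
  -- Key identity: 2 a(ab) = ab + (a,b) a, from the eigenspace decomposition of b.
  have key : ∀ b : A, (2:F) • (a * (a * b)) = a * b + Bf a b • a := by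
    intro b
    obtain ⟨b0, hb0, bh, hbh, b1, hb1, hdec⟩ := ha.decomp b (Set.mem_univ b)
    obtain ⟨c, hc⟩ := ha.prim b1 hb1
    have hb0' : a * b0 = 0 := by simpa using hb0.2
    have hbh' : a * bh = (2⁻¹:F) • bh := hbh.2
    have hb1' : a * b1 = b1 := by simpa using hb1.2
    have hBb0 : Bf a b0 = 0 := by
      have h := hinv a a b0
      rw [haa, hb0'] at h
      simpa using h
    have hBbh : Bf a bh = 0 := by
      have h := hinv a a bh
      rw [haa, hbh', map_smul, smul_eq_mul] at h
      have h' : (2:F) * Bf a bh = Bf a bh := by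
        conv_lhs => rw [h]
        rw [← mul_assoc, mul_inv_cancel₀ h2, one_mul]
      linear_combination h'
    have hBab : Bf a b = c := by
      rw [hdec, map_add, map_add, hBb0, hBbh, hc, map_smul, smul_eq_mul, hBaa]
      ring
    have hab : a * b = (2⁻¹:F) • bh + c • a := by
      rw [← ha_def] at hc
      rw [hdec, mul_add, mul_add, hb0', hbh', hb1', hc]
      abel
    rw [hBab, hab, mul_add, mul_smul_comm, mul_smul_comm, hbh', haa]
    match_scalars <;> field_simp <;> ring
  have hc1 : ∀ j, j ≠ i0 → Bf a (bb j) ≠ 1 := fun j hj => hqd i0 j (Ne.symm hj)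
  have h0 : ∀ b : A, a * ((2:F) • (a * b) - Bf a b • a - b) = 0 := by
    intro b
    rw [mul_sub, mul_sub, mul_smul_comm, mul_smul_comm, haa, key b]
    abel
  apply le_antisymm
  · rw [Submodule.span_le]
    rintro x ⟨j, hj, rfl⟩
    show a * xab F Bf a (bb j) = (0:F) • xab F Bf a (bb j)
    rw [zero_smul]
    simp only [xab]
    rw [mul_smul_comm, h0 (bb j), smul_zero]
  · intro x hx
    have hx0 : a * x = 0 := by
      have : a * x = (0:F) • x := hx
      simpa using this
    set L : A →ₗ[F] A := LinearMap.mulLeft F a with hL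
    set P : A →ₗ[F] A := LinearMap.id - (3:F) • L + (2:F) • (L ∘ₗ L) with hPdef
    have hP : ∀ y : A, P y = y - (3:F) • (a * y) + (2:F) • (a * (a * y)) := by
      intro y
      simp [hPdef, hL, LinearMap.mulLeft_apply]
    have hPx : P x = x := by
      rw [hP, hx0]
      simp
    have hPspan : ∀ y : A,
        P y ∈ Submodule.span F {x : A | ∃ j : ι, j ≠ i0 ∧ x = xab F Bf a (bb j)} := by
      intro y
      have hy : y ∈ Submodule.span F (Set.range bb) := by
        rw [bb.span_eq]; trivial
      induction hy using Submodule.span_induction with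
      | mem z hz =>
          obtain ⟨j, rfl⟩ := hz
          by_cases hj : j = i0
          · have : P (bb j) = 0 := by
              rw [hj, hP, show bb i0 = a from rfl, haa, haa]
              module
            rw [this]
            exact Submodule.zero_mem _
          · have hcne : Bf a (bb j) - 1 ≠ 0 := sub_ne_zero.mpr (hc1 j hj)
            have hxab : (Bf a (bb j) - 1) • xab F Bf a (bb j)
                = (2:F) • (a * bb j) - Bf a (bb j) • a - bb j := by
              simp only [xab]
              rw [smul_smul, mul_inv_cancel₀ hcne, one_smul]
            have hPj : P (bb j) = ((1:F) - Bf a (bb j)) • xab F Bf a (bb j) := by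
              rw [hP, key (bb j),
                show ((1:F) - Bf a (bb j)) = -(Bf a (bb j) - 1) by ring,
                neg_smul, hxab]
              module
            rw [hPj]
            exact Submodule.smul_mem _ _ (Submodule.subset_span ⟨j, hj, rfl⟩)
      | zero => simp
      | add u v hu hv ihu ihv =>
          rw [map_add]
          exact Submodule.add_mem _ ihu ihv
      | smul c u hu ihu =>
          rw [map_smul]
          exact Submodule.smul_mem _ _ ihu
    rw [← hPx]
    exact hPspan x
end

section
/- Let A be a primitive axial algebra of Jordan type 1/2 over a field F of characteristic not 2, and let a, b be primitive axes in A with (a, b) ≠ 0 and (a, b) ≠ 1. Then A_0(a) ∩ A_{1/2}(b) = (0). -/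
open AxialPaper in
private lemma mem_evecIn_univ' {F : Type*} [Field F] {A : Type*} [NonUnitalNonAssocCommRing A]
    [Module F A] [SMulCommClass F A A] [IsScalarTower F A A]
    {e x : A} {lam : F} :
    x ∈ evecIn F (Set.univ : Set A) e lam ↔ e * x = lam • x := by
  simp [evecIn]

open AxialPaper in
/-- Lemma `xa(b)PrimInA0`: if `(a,b) ≠ 0, 1` then
`A_0(a) ∩ A_{1/2}(b) = (0)`. -/
theorem stmt10 {F : Type*} [Field F] {A : Type*} [NonUnitalNonAssocCommRing A]
    [Module F A] [SMulCommClass F A A] [IsScalarTower F A A]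
    (h2 : (2 : F) ≠ 0)
    (hA : IsAxialJordanHalf F A)
    (Bf : A →ₗ[F] A →ₗ[F] F) (hB : IsFrobeniusForm F Bf)
    (a b : A) (ha : IsPrimitiveAxis F a) (hb : IsPrimitiveAxis F b)
    (h0 : Bf a b ≠ 0) (h1 : Bf a b ≠ 1) :
    ∀ z : A, a * z = 0 → b * z = (2⁻¹ : F) • z → z = 0 := by
  obtain ⟨-, hsymm, hinv, hax⟩ := hB
  intro z haz hbz
  have h2i : (2⁻¹ : F) ≠ 0 := inv_ne_zero h2
  have h2inv : (2 : F) * 2⁻¹ = 1 := mul_inv_cancel₀ h2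
  set α := Bf a b with hαdef
  have haa : a * a = a := ha.idem
  have hbb : b * b = b := hb.idem
  -- decompose b w.r.t. a
  obtain ⟨b0, hb0, bh, hbh, b1, hb1, hbdec⟩ := ha.decomp b (Set.mem_univ b)
  obtain ⟨c, hc⟩ := ha.prim b1 hb1
  have hb0' : a * b0 = 0 := by simpa using mem_evecIn_univ'.mp hb0
  have hbh' : a * bh = (2⁻¹ : F) • bh := mem_evecIn_univ'.mp hbh
  -- decompose a w.r.t. b
  obtain ⟨a0, ha0, ah, hah, a1, ha1, hadec⟩ := hb.decomp a (Set.mem_univ a)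
  obtain ⟨c', hc'⟩ := hb.prim a1 ha1
  have ha0' : b * a0 = 0 := by simpa using mem_evecIn_univ'.mp ha0
  have hah' : b * ah = (2⁻¹ : F) • ah := mem_evecIn_univ'.mp hah
  -- the coefficients c, c' equal α = Bf a b
  have hBaa : Bf a a = 1 := hax a ha
  have hBbb : Bf b b = 1 := hax b hb
  have hBab0 : Bf a b0 = 0 := by
    have : Bf a b0 = Bf a (a * b0) := by conv_lhs => rw [← haa, hinv]
    simpa [hb0'] using this
  have hBabh : Bf a bh = 0 := by
    have h : Bf a bh = 2⁻¹ * Bf a bh := by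
      conv_lhs => rw [← haa, hinv, hbh']
      simp
    linear_combination 2 * h + Bf a bh * h2inv
  have hcα : c = α := by
    have h := congrArg (Bf a) hbdec
    simp [map_add, hBab0, hBabh, hc, map_smul, hBaa, ← hαdef] at h
    exact h.symm
  have hBba0 : Bf b a0 = 0 := by
    have : Bf b a0 = Bf b (b * a0) := by conv_lhs => rw [← hbb, hinv]
    simpa [ha0'] using this
  have hBbah : Bf b ah = 0 := by
    have h : Bf b ah = 2⁻¹ * Bf b ah := by
      conv_lhs => rw [← hbb, hinv, hah']
      simp
    linear_combination 2 * h + Bf b ah * h2inv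
  have hc'α : c' = α := by
    have h := congrArg (Bf b) hadec
    simp [map_add, hBba0, hBbah, hc', map_smul, hBbb] at h
    rw [hαdef, hsymm a b]
    exact h.symm
  rw [hcα] at hc; rw [hc'α] at hc'
  -- memberships of z
  have hz0 : z ∈ evecIn F (Set.univ : Set A) a 0 := mem_evecIn_univ'.mpr (by simp [haz])
  have hzh : z ∈ evecIn F (Set.univ : Set A) b (2⁻¹ : F) := mem_evecIn_univ'.mpr hbz
  -- Step 1: bh * z = 0
  have hbhz : bh * z = 0 := by
    have hE : b0 * z + bh * z = (2⁻¹ : F) • z := by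
      have : b * z = b0 * z + bh * z + α • (a * z) := by
        rw [hbdec, hc]; rw [add_mul, add_mul, smul_mul_assoc]
      rw [haz, smul_zero, add_zero] at this
      rw [← this, hbz]
    have h1' : a * (b0 * z) = 0 := by
      simpa using mem_evecIn_univ'.mp (ha.fusion00 b0 hb0 z hz0)
    have h2' : a * (bh * z) = (2⁻¹ : F) • (bh * z) := by
      have := mem_evecIn_univ'.mp (ha.fusion0h z hz0 bh hbh)
      rwa [mul_comm z bh] at this
    have h3' : a * (b0 * z + bh * z) = (2⁻¹ : F) • (a * z) := by
      rw [hE, mul_smul_comm]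
    rw [mul_add, h1', h2', zero_add, haz, smul_zero] at h3'
    exact (smul_eq_zero.mp h3').resolve_left h2i
  -- Step 2: ah * z = 0
  have hahz : ah * z = 0 := by
    obtain ⟨z0, hz0m, z1, hz1m, hzz⟩ := hb.fusionhh ah hah z hzh
    have hz0' : b * z0 = 0 := by simpa using mem_evecIn_univ'.mp hz0m
    have hz1' : b * z1 = z1 := by simpa using mem_evecIn_univ'.mp hz1m
    set v : A := a0 * z + α • ((2⁻¹ : F) • z) with hvdef
    have hbv : b * v = (2⁻¹ : F) • v := by
      have h1' : b * (a0 * z) = (2⁻¹ : F) • (a0 * z) :=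
        mem_evecIn_univ'.mp (hb.fusion0h a0 ha0 z hzh)
      rw [hvdef, mul_add, h1', mul_smul_comm, mul_smul_comm, hbz, smul_add]
      rw [smul_comm (2⁻¹ : F) α]
    have hE1 : v + z0 + z1 = 0 := by
      have : a * z = a0 * z + (z0 + z1) + α • (b * z) := by
        rw [hadec, hc']; rw [add_mul, add_mul, smul_mul_assoc, hzz]
      rw [haz, hbz] at this
      rw [hvdef]
      linear_combination (norm := module) -this
    have hE2 : (2⁻¹ : F) • v + z1 = 0 := by
      have := congrArg (fun w => b * w) hE1
      simpa [mul_add, hbv, hz0', hz1'] using this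
    have hE3 : (2⁻¹ : F) • ((2⁻¹ : F) • v) + z1 = 0 := by
      have := congrArg (fun w => b * w) hE2
      simpa [mul_add, mul_smul_comm, hbv, hz1'] using this
    have hv : ((2⁻¹ : F) - 2⁻¹ * 2⁻¹) • v = 0 := by
      rw [sub_smul, mul_smul]
      linear_combination (norm := module) hE2 - hE3
    have hkne : ((2⁻¹ : F) - 2⁻¹ * 2⁻¹) ≠ 0 := by
      have hk : ((2⁻¹ : F) - 2⁻¹ * 2⁻¹) = 2⁻¹ * 2⁻¹ := by
        linear_combination (-(2⁻¹ : F)) * h2inv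
      rw [hk]
      exact mul_ne_zero h2i h2i
    have hv0 : v = 0 := (smul_eq_zero.mp hv).resolve_left hkne
    have hz1_0 : z1 = 0 := by
      have := hE2
      rw [hv0, smul_zero, zero_add] at this
      exact this
    have hz0_0 : z0 = 0 := by
      have := hE1
      rw [hv0, zero_add, hz1_0, add_zero] at this
      exact this
    rw [hzz, hz0_0, hz1_0, add_zero]
  -- final computation: (a*b)*z two ways
  have hab1 : a * b = (2⁻¹ : F) • bh + α • a := by
    rw [hbdec, hc, mul_add, mul_add, hb0', hbh', mul_smul_comm, haa, zero_add]
  have hab2 : a * b = (2⁻¹ : F) • ah + α • b := by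
    rw [mul_comm, hadec, hc', mul_add, mul_add, ha0', hah', mul_smul_comm, hbb, zero_add]
  have hfin : (0 : A) = α • ((2⁻¹ : F) • z) := by
    calc (0 : A) = ((2⁻¹ : F) • bh + α • a) * z := by
          rw [add_mul, smul_mul_assoc, smul_mul_assoc, hbhz, haz, smul_zero, smul_zero,
            add_zero]
      _ = ((2⁻¹ : F) • ah + α • b) * z := by rw [← hab1, ← hab2]
      _ = α • ((2⁻¹ : F) • z) := by
          rw [add_mul, smul_mul_assoc, smul_mul_assoc, hahz, smul_zero, zero_add, hbz]
  have : (α * 2⁻¹) • z = 0 := by rw [mul_smul]; exact hfin.symm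
  exact (smul_eq_zero.mp this).resolve_left (mul_ne_zero h0 h2i)
end

section
/- Let A be a semisimple primitive axial algebra of Jordan type 1/2 over a field F of characteristic not 2, and suppose A has a quasi-definite linear basis X consisting of primitive axes. If for each x_i ∈ X the subalgebra A_0(x_i) contains a unit e_0(x_i), then for any x_1 ∈ X the element e = e_0(x_1) + x_1 is a unit of A. -/
section AuxProofs
open AxialPaper

variable {F : Type*} [Field F] {A : Type*} [NonUnitalNonAssocCommRing A]
  [Module F A] [SMulCommClass F A A] [IsScalarTower F A A]

private lemma stmt17_orth_zero (Bf : A →ₗ[F] A →ₗ[F] F)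
    (hinv : ∀ x y z : A, Bf (x * y) z = Bf x (y * z))
    {a : A} (haa : a * a = a) {x : A} (hx : a * x = 0) : Bf a x = 0 := by
  have h : Bf (a * a) x = Bf a (a * x) := hinv a a x
  rw [haa, hx, map_zero] at h
  exact h

private lemma stmt17_orth_half (h2 : (2 : F) ≠ 0) (Bf : A →ₗ[F] A →ₗ[F] F)
    (hinv : ∀ x y z : A, Bf (x * y) z = Bf x (y * z))
    {a : A} (haa : a * a = a) {x : A} (hx : a * x = (2⁻¹ : F) • x) : Bf a x = 0 := by
  have h : Bf (a * a) x = Bf a (a * x) := hinv a a x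
  rw [haa, hx, map_smul, smul_eq_mul] at h
  have h4 : ((1 : F) - 2⁻¹) * Bf a x = 0 := by linear_combination h
  have h5 : ((1 : F) - 2⁻¹) ≠ 0 := by
    have : (1 : F) - 2⁻¹ = 2⁻¹ := by field_simp; ring
    rw [this]; exact inv_ne_zero h2
  exact (mul_eq_zero.mp h4).resolve_left h5

private lemma stmt17_orth_zero_half (h2 : (2 : F) ≠ 0) (Bf : A →ₗ[F] A →ₗ[F] F)
    (hsymm : ∀ x y : A, Bf x y = Bf y x)
    (hinv : ∀ x y z : A, Bf (x * y) z = Bf x (y * z))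
    {a x y : A} (hx : a * x = 0) (hy : a * y = (2⁻¹ : F) • y) : Bf x y = 0 := by
  have h1 : Bf (a * y) x = (2⁻¹ : F) * Bf y x := by
    rw [hy, map_smul, LinearMap.smul_apply, smul_eq_mul]
  have h2' : Bf (a * y) x = 0 := by
    rw [mul_comm a y, hinv y a x, hx, map_zero]
  have h3 : Bf y x = 0 := by
    have h := h1.symm.trans h2'
    rcases mul_eq_zero.mp h with h | h
    · exact absurd h (inv_ne_zero h2)
    · exact h
  rw [hsymm x y, h3]

private lemma stmt17_key (h2 : (2 : F) ≠ 0)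
    (Bf : A →ₗ[F] A →ₗ[F] F) (hB : IsFrobeniusForm F Bf)
    {a b : A} (ha : IsPrimitiveAxis F a) (hb : IsPrimitiveAxis F b)
    (hab1 : Bf a b ≠ 1)
    {e0 : A} (he0a : a * e0 = 0)
    (he0 : ∀ z : A, a * z = 0 → e0 * z = z) :
    Bf e0 b = 1 - Bf a b := by
  obtain ⟨-, hsymm, hinv, hnorm⟩ := hB
  have hBaa : Bf a a = 1 := hnorm a ha
  have hBbb : Bf b b = 1 := hnorm b hb
  -- decompose b w.r.t. a
  obtain ⟨b0, hb0, bh, hbh, b1, hb1, hdec⟩ := ha.decomp b (Set.mem_univ b)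
  have hab0 : a * b0 = 0 := by simpa using hb0.2
  have habh : a * bh = (2⁻¹ : F) • bh := hbh.2
  obtain ⟨cb, hcb⟩ := ha.prim b1 hb1
  rw [hcb] at hdec
  have hBab0 : Bf a b0 = 0 := stmt17_orth_zero Bf hinv ha.idem hab0
  have hBabh : Bf a bh = 0 := stmt17_orth_half h2 Bf hinv ha.idem habh
  have hcbβ : cb = (Bf a b) := by
    have h : Bf a b = Bf a b0 + Bf a bh + cb * Bf a a := by
      rw [hdec]; simp [map_add, map_smul, smul_eq_mul]
    rw [hBab0, hBabh, hBaa] at h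
    simpa using h.symm
  rw [hcbβ] at hdec
  have hb0' : b0 = b - bh - (Bf a b) • a := by
    have h1 := eq_sub_of_add_eq hdec.symm
    have h1' := eq_sub_of_add_eq h1
    rw [h1']; abel
  -- decompose a w.r.t. b
  obtain ⟨a0, ha0, ah, hah, a1, ha1, hdeca⟩ := hb.decomp a (Set.mem_univ a)
  have hba0 : b * a0 = 0 := by simpa using ha0.2
  have hbah : b * ah = (2⁻¹ : F) • ah := hah.2
  obtain ⟨ca, hca⟩ := hb.prim a1 ha1
  rw [hca] at hdeca
  have hcaβ : ca = (Bf a b) := by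
    have hBba0 : Bf b a0 = 0 := stmt17_orth_zero Bf hinv hb.idem hba0
    have hBbah : Bf b ah = 0 := stmt17_orth_half h2 Bf hinv hb.idem hbah
    have h : Bf b a = Bf b a0 + Bf b ah + ca * Bf b b := by
      rw [hdeca]; simp [map_add, map_smul, smul_eq_mul]
    rw [hBba0, hBbah, hBbb, hsymm b a] at h
    simpa using h.symm
  rw [hcaβ] at hdeca
  -- products with a and b
  have habmul : a * b = (2⁻¹ : F) • bh + (Bf a b) • a := by
    conv_lhs => rw [hdec, mul_add, mul_add, hab0, habh, mul_smul_comm, ha.idem]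
    rw [zero_add]
  have hbamul : b * a = (2⁻¹ : F) • ah + (Bf a b) • b := by
    conv_lhs => rw [hdeca, mul_add, mul_add, hba0, hbah, mul_smul_comm, hb.idem]
    rw [zero_add]
  -- relate ah and bh
  have hahbh : ah = bh + ((2 : F) * (Bf a b)) • a - ((2 : F) * (Bf a b)) • b := by
    have h : (2⁻¹ : F) • bh + (Bf a b) • a = (2⁻¹ : F) • ah + (Bf a b) • b := by
      rw [← habmul, ← hbamul, mul_comm]
    have h4 := congrArg (fun z => (2 : F) • z) h
    simp only [smul_add, smul_smul, mul_inv_cancel₀ h2, one_smul] at h4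
    -- h4 : bh + (2*(Bf a b)) • a = ah + (2*(Bf a b)) • b
    have h5 : ah + ((2 : F) * (Bf a b)) • b = bh + ((2 : F) * (Bf a b)) • a := h4.symm
    rw [← h5]; abel
  have hbhalt : bh = ah - ((2 : F) * (Bf a b)) • a + ((2 : F) * (Bf a b)) • b := by
    rw [hahbh]; abel
  -- R2 : b * bh
  have hbbh : b * bh = (Bf a b) • b0 + (2⁻¹ : F) • bh + ((Bf a b) - (Bf a b) * (Bf a b)) • a := by
    calc b * bh = b * (ah - ((2 : F) * (Bf a b)) • a + ((2 : F) * (Bf a b)) • b) := by rw [← hbhalt]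
    _ = b * ah - ((2 : F) * (Bf a b)) • (b * a) + ((2 : F) * (Bf a b)) • (b * b) := by
          simp only [mul_sub, mul_add, mul_smul_comm]
    _ = (2⁻¹ : F) • ah - ((2 : F) * (Bf a b)) • ((2⁻¹ : F) • ah + (Bf a b) • b) + ((2 : F) * (Bf a b)) • b := by
          rw [hbah, hbamul, hb.idem]
    _ = (Bf a b) • b0 + (2⁻¹ : F) • bh + ((Bf a b) - (Bf a b) * (Bf a b)) • a := by
          rw [hahbh, hb0']
          match_scalars <;> field_simp <;> ring
  -- bh * bh via fusion
  obtain ⟨w0, hw0, w1, hw1, hbh2⟩ := ha.fusionhh bh hbh bh hbh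
  obtain ⟨c', hc'⟩ := ha.prim w1 hw1
  rw [hc'] at hbh2
  have haw0 : a * w0 = 0 := by simpa using hw0.2
  have hBaw0 : Bf a w0 = 0 := stmt17_orth_zero Bf hinv ha.idem haw0
  -- b0 * bh expression
  have hEdef : b0 * bh = (Bf a b) • b0 - w0 + ((2⁻¹ : F) - (Bf a b) * 2⁻¹) • bh
      + ((Bf a b) - (Bf a b) * (Bf a b) - c') • a := by
    calc b0 * bh = (b - bh - (Bf a b) • a) * bh := by rw [← hb0']
    _ = b * bh - bh * bh - (Bf a b) • (a * bh) := by
          simp only [sub_mul, smul_mul_assoc]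
    _ = ((Bf a b) • b0 + (2⁻¹ : F) • bh + ((Bf a b) - (Bf a b) * (Bf a b)) • a) - (w0 + c' • a)
          - (Bf a b) • ((2⁻¹ : F) • bh) := by rw [hbbh, hbh2, habh]
    _ = (Bf a b) • b0 - w0 + ((2⁻¹ : F) - (Bf a b) * 2⁻¹) • bh + ((Bf a b) - (Bf a b) * (Bf a b) - c') • a := by
          match_scalars <;> field_simp <;> ring
  have hfE : a * (b0 * bh) = (2⁻¹ : F) • (b0 * bh) := (ha.fusion0h b0 hb0 bh hbh).2
  -- extract the A0-part
  have hkey0 : (Bf a b) • b0 - w0 = ((Bf a b) - (Bf a b) * (Bf a b) - c') • a := by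
    have h1 : a * (b0 * bh) = (2⁻¹ : F) • (((2⁻¹ : F) - (Bf a b) * 2⁻¹) • bh)
        + ((Bf a b) - (Bf a b) * (Bf a b) - c') • a := by
      rw [hEdef]
      simp only [mul_add, mul_sub, mul_smul_comm]
      rw [hab0, haw0, habh, ha.idem]
      match_scalars <;> field_simp <;> ring
    have h3 := hfE.symm.trans h1
    have hinj : Function.Injective (fun x : A => (2⁻¹ : F) • x) :=
      smul_right_injective A (inv_ne_zero h2)
    apply hinj
    show (2⁻¹ : F) • ((Bf a b) • b0 - w0) = (2⁻¹ : F) • (((Bf a b) - (Bf a b) * (Bf a b) - c') • a)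
    calc (2⁻¹ : F) • ((Bf a b) • b0 - w0)
        = (2⁻¹ : F) • ((Bf a b) • b0 - w0 + ((2⁻¹ : F) - (Bf a b) * 2⁻¹) • bh + ((Bf a b) - (Bf a b) * (Bf a b) - c') • a)
          - (2⁻¹ : F) • (((2⁻¹ : F) - (Bf a b) * 2⁻¹) • bh)
          - (2⁻¹ : F) • (((Bf a b) - (Bf a b) * (Bf a b) - c') • a) := by module
    _ = ((2⁻¹ : F) • (((2⁻¹ : F) - (Bf a b) * 2⁻¹) • bh) + ((Bf a b) - (Bf a b) * (Bf a b) - c') • a)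
          - (2⁻¹ : F) • (((2⁻¹ : F) - (Bf a b) * 2⁻¹) • bh)
          - (2⁻¹ : F) • (((Bf a b) - (Bf a b) * (Bf a b) - c') • a) := by rw [← hEdef, h3]
    _ = (2⁻¹ : F) • (((Bf a b) - (Bf a b) * (Bf a b) - c') • a) := by
          match_scalars <;> field_simp <;> ring
  have hm : (Bf a b) - (Bf a b) * (Bf a b) - c' = 0 := by
    have h := congrArg (Bf a) hkey0
    simp only [map_sub, map_smul, smul_eq_mul] at h
    rw [hBab0, hBaw0, hBaa] at h
    simpa using h.symm
  have hc'' : c' = (Bf a b) - (Bf a b) * (Bf a b) := by linear_combination -hm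
  have hw0v : w0 = (Bf a b) • b0 := by
    rw [hm, zero_smul] at hkey0
    exact (sub_eq_zero.mp hkey0).symm
  have hbhsq : bh * bh = (Bf a b) • b0 + ((Bf a b) - (Bf a b) * (Bf a b)) • a := by
    rw [hbh2, hw0v, hc'']
  -- b0 squared
  have hb0sq : b0 * b0 = (1 - (Bf a b)) • b0 := by
    calc b0 * b0 = (b - bh - (Bf a b) • a) * (b - bh - (Bf a b) • a) := by rw [← hb0']
    _ = (1 - (Bf a b)) • b0 := by
        simp only [sub_mul, mul_sub, smul_mul_assoc, mul_smul_comm, smul_smul]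
        rw [hb.idem, hbbh, mul_comm bh b, hbbh, mul_comm bh a, habh, mul_comm b a,
          habmul, hbhsq, ha.idem, hb0']
        match_scalars <;> field_simp <;> ring
  -- form values
  have hne : (1 : F) - (Bf a b) ≠ 0 := sub_ne_zero.mpr (Ne.symm hab1)
  have hbheq : bh = (2 : F) • (a * b) - ((2 : F) * (Bf a b)) • a := by
    rw [habmul, smul_add, smul_smul, smul_smul, mul_inv_cancel₀ h2, one_smul]
    abel
  have hBbhb : Bf bh b = 2 * (Bf a b) - 2 * ((Bf a b) * (Bf a b)) := by
    rw [hbheq, map_sub, map_smul, map_smul, LinearMap.sub_apply, LinearMap.smul_apply,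
      LinearMap.smul_apply, smul_eq_mul, smul_eq_mul, hinv a b b, hb.idem]
    ring
  have hBb0b : Bf b0 b = (1 - (Bf a b)) * (1 - (Bf a b)) := by
    rw [hb0', map_sub, map_sub, map_smul, LinearMap.sub_apply, LinearMap.sub_apply,
      LinearMap.smul_apply, smul_eq_mul, hBbb, hBbhb]
    ring
  have hBb0bh : Bf b0 bh = 0 := stmt17_orth_zero_half h2 Bf hsymm hinv hab0 habh
  have hBb0a : Bf b0 a = 0 := by rw [hsymm b0 a]; exact hBab0
  have hBb0b0 : Bf b0 b0 = (1 - (Bf a b)) * (1 - (Bf a b)) := by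
    have h : Bf b0 b = Bf b0 b0 + Bf b0 bh + (Bf a b) * Bf b0 a := by
      conv_lhs => rw [hdec]
      simp [map_add, map_smul, smul_eq_mul]
    rw [hBb0b, hBb0bh, hBb0a] at h
    have := h.symm
    simpa using this
  have hBe0b0 : Bf e0 b0 = 1 - (Bf a b) := by
    have h1 : Bf (e0 * b0) b0 = Bf e0 (b0 * b0) := hinv e0 b0 b0
    rw [he0 b0 hab0, hb0sq, map_smul, smul_eq_mul, hBb0b0] at h1
    exact mul_left_cancel₀ hne h1.symm
  have hBe0bh : Bf e0 bh = 0 := stmt17_orth_zero_half h2 Bf hsymm hinv he0a habh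
  have hBe0a : Bf e0 a = 0 := by
    rw [hsymm e0 a]; exact stmt17_orth_zero Bf hinv ha.idem he0a
  have h : Bf e0 b = Bf e0 b0 + Bf e0 bh + (Bf a b) * Bf e0 a := by
    conv_lhs => rw [hdec]
    simp [map_add, map_smul, smul_eq_mul]
  rw [hBe0b0, hBe0bh, hBe0a] at h
  rw [h]; ring

end AuxProofs

open AxialPaper in
/-- Lemma `ed`: in a semisimple axial algebra of Jordan type 1/2 with a
quasi-definite basis `X` of primitive axes, if each `A_0(x_i)` has a unit `e_0(x_i)`,
then `e_0(x_i) + x_i` is a unit of `A` (for every `x_i ∈ X`). -/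
theorem stmt17 {F : Type*} [Field F] {A : Type*} [NonUnitalNonAssocCommRing A]
    [Module F A] [SMulCommClass F A A] [IsScalarTower F A A]
    (h2 : (2 : F) ≠ 0)
    (hA : IsAxialJordanHalf F A)
    (Bf : A →ₗ[F] A →ₗ[F] F) (hB : IsFrobeniusForm F Bf)
    (hss : ∀ x : A, (∀ v : A, Bf x v = 0) → x = 0)
    (ι : Type*) (bb : Module.Basis ι F A)
    (hax : ∀ i, IsPrimitiveAxis F (bb i))
    (hqd : ∀ i j, i ≠ j → Bf (bb i) (bb j) ≠ 1)
    (e0 : ι → A)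
    (he0mem : ∀ i, e0 i ∈ evecIn F (Set.univ : Set A) (bb i) 0)
    (he0 : ∀ i, ∀ z ∈ evecIn F (Set.univ : Set A) (bb i) 0, e0 i * z = z) :
    ∀ i : ι, ∀ x : A, (e0 i + bb i) * x = x := by
  have hsymm := hB.2.1
  have hinv := hB.2.2.1
  have hnorm := hB.2.2.2
  have hmem : ∀ i, (bb i) * (e0 i) = 0 := fun i => by simpa using (he0mem i).2
  have he0' : ∀ i, ∀ z : A, bb i * z = 0 → e0 i * z = z := by
    intro i z hz
    exact he0 i z ⟨Set.mem_univ z, by simpa using hz⟩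
  have hone : ∀ i j, Bf (e0 i + bb i) (bb j) = 1 := by
    intro i j
    by_cases h : j = i
    · subst h
      have h1 : Bf (e0 j) (bb j) = 0 := by
        rw [hsymm]; exact stmt17_orth_zero Bf hinv (hax j).idem (hmem j)
      rw [map_add, LinearMap.add_apply, h1, hnorm (bb j) (hax j), zero_add]
    · have hk := stmt17_key h2 Bf hB (hax i) (hax j)
        (hqd i j (fun he => h he.symm)) (hmem i) (he0' i)
      rw [map_add, LinearMap.add_apply, hk]
      ring
  intro i
  have hall : ∀ j, e0 i + bb i = e0 j + bb j := by
    intro j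
    have hzero : ∀ k, Bf ((e0 i + bb i) - (e0 j + bb j)) (bb k) = 0 := by
      intro k
      rw [map_sub, LinearMap.sub_apply, hone i k, hone j k, sub_self]
    have hfun : Bf ((e0 i + bb i) - (e0 j + bb j)) = 0 := by
      apply bb.ext
      intro k
      rw [hzero k]
      simp
    have hz := hss _ (fun v => by rw [hfun]; simp)
    exact sub_eq_zero.mp hz
  have hmulbasis : ∀ j, (e0 i + bb i) * bb j = bb j := by
    intro j
    rw [hall j, add_mul, (hax j).idem, mul_comm (e0 j) (bb j), hmem j, zero_add]
  have hlin : LinearMap.mulLeft F (e0 i + bb i) = LinearMap.id := by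
    apply bb.ext
    intro j
    simpa [LinearMap.mulLeft_apply] using hmulbasis j
  intro x
  calc (e0 i + bb i) * x = LinearMap.mulLeft F (e0 i + bb i) x := rfl
  _ = LinearMap.id x := by rw [hlin]
  _ = x := rfl
end
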